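/- Let P ⊂ ℚ² be a Fano polygon and let E be an edge of P with primitive inner normal vector w = w_E. Then there exists a mutation of P with respect to w (i.e. there exist a factor F = conv{0, v} with v primitive, w(v) = 0, and lattice polygons {G_h} satisfying the defining inclusions) if and only if k_E ≥ r_E, that is, |E ∩ N| − 1 ≥ r_E. -/

import Mathlib

open scoped Pointwise

namespace FanoPaper

abbrev NZ : Type := ℤ × ℤ
abbrev NQ : Type := ℚ × ℚ

/-- Embedding of the lattice `N = ℤ²` into `N ⊗ ℚ = ℚ²`. -/
def ι (v : NZ) : NQ := ((v.1 : ℚ), (v.2 : ℚ))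

/-- Pairing between `M = Hom(N, ℤ)` (identified with `ℤ²`) and `N`. -/
def dotZ (w v : NZ) : ℤ := w.1 * v.1 + w.2 * v.2

/-- Pairing between `M` and `N ⊗ ℚ`. -/
def dotQ (w : NZ) (x : NQ) : ℚ := (w.1 : ℚ) * x.1 + (w.2 : ℚ) * x.2

/-- The determinant `u ∧ u' = u₁u'₂ − u₂u'₁`. -/
def wedge (u v : NZ) : ℤ := u.1 * v.2 - u.2 * v.1

/-- A lattice vector is primitive if its coordinates are coprime. -/
def Primitive (v : NZ) : Prop := IsCoprime v.1 v.2

/-- A Fano polygon: the convex hull of a finite set of primitive lattice vertices,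
containing the origin in its strict interior; `verts` is exactly the vertex
(extreme point) set. -/
structure FanoPolygon where
  verts : Finset NZ
  verts_nonempty : verts.Nonempty
  verts_primitive : ∀ v ∈ verts, Primitive v
  zero_mem_interior : (0 : NQ) ∈ interior (convexHull ℚ (ι '' (verts : Set NZ)))
  verts_extreme : ∀ v ∈ verts, ι v ∉ convexHull ℚ (ι '' ((verts.erase v : Finset NZ) : Set NZ))

namespace FanoPolygon

/-- The polygon itself, as a subset of `ℚ²`. -/
def hull (P : FanoPolygon) : Set NQ := convexHull ℚ (ι '' (P.verts : Set NZ))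

/-- `h_min := min w(P)`. -/
def hMin (P : FanoPolygon) (w : NZ) : ℤ := P.verts.inf' P.verts_nonempty (dotZ w)

/-- `h_max := max w(P)`. -/
def hMax (P : FanoPolygon) (w : NZ) : ℤ := P.verts.sup' P.verts_nonempty (dotZ w)

/-- `w` is the primitive inner normal vector of an edge of `P`:
`w` is primitive and attains its minimum on `P` at (at least) two vertices. -/
def IsEdgeNormal (P : FanoPolygon) (w : NZ) : Prop :=
  Primitive w ∧ 2 ≤ (P.verts.filter (fun v => dotZ w v = P.hMin w)).card

/-- The edge of `P` with inner normal `w`, i.e. the face on which `w` is minimal. -/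
def edge (P : FanoPolygon) (w : NZ) : Set NQ :=
  {x | x ∈ P.hull ∧ dotQ w x = (P.hMin w : ℚ)}

/-- The height (local index) `r_E` of the edge with inner normal `w`. -/
def height (P : FanoPolygon) (w : NZ) : ℤ := -(P.hMin w)

/-- The width `k_E = |E ∩ N| − 1` of the edge with inner normal `w`. -/
noncomputable def width (P : FanoPolygon) (w : NZ) : ℕ :=
  {v : NZ | ι v ∈ P.edge w}.ncard - 1

/-- `w_h(P) := conv{x ∈ P ∩ N : w(x) = h}`. -/
def slice (P : FanoPolygon) (w : NZ) (h : ℤ) : Set NQ :=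
  convexHull ℚ (ι '' {v : NZ | ι v ∈ P.hull ∧ dotZ w v = h})

end FanoPolygon

/-- The factor `F = conv{0, v}`. -/
def factor (v : NZ) : Set NQ := convexHull ℚ {(0 : NQ), ι v}

/-- A (possibly empty) lattice polytope in `ℚ²`. -/
def IsLatticePolytope (S : Set NQ) : Prop :=
  ∃ T : Finset NZ, S = convexHull ℚ (ι '' (T : Set NZ))

/-- The data `{G_h}` required to mutate `P` with respect to `w` with factor `conv{0, v}`:
for each `h_min ≤ h ≤ −1`, `G_h` is a lattice polytope with
`{vertices of P at height h} ⊆ G_h + |h|·F ⊆ w_h(P)`. -/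
def MutationData (P : FanoPolygon) (w v : NZ) (G : ℤ → Set NQ) : Prop :=
  ∀ h : ℤ, P.hMin w ≤ h → h ≤ -1 →
    IsLatticePolytope (G h) ∧
    ι '' {x : NZ | x ∈ P.verts ∧ dotZ w x = h} ⊆ G h + ((|h| : ℚ) • factor v) ∧
    G h + ((|h| : ℚ) • factor v) ⊆ P.slice w h

/-- The mutated set `mut_w(P, F)`. -/
def mutSet (P : FanoPolygon) (w v : NZ) (G : ℤ → Set NQ) : Set NQ :=
  convexHull ℚ ((⋃ h ∈ Finset.Icc (P.hMin w) (-1 : ℤ), G h) ∪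
    ⋃ h ∈ Finset.Icc (0 : ℤ) (P.hMax w), (P.slice w h + ((h : ℚ) • factor v)))

/-- `Q` is the mutation of `P` with respect to `w` with factor `conv{0, v}`. -/
def IsMutationWith (P : FanoPolygon) (w v : NZ) (Q : FanoPolygon) : Prop :=
  ∃ G : ℤ → Set NQ, MutationData P w v G ∧ Q.hull = mutSet P w v G

/-- `Q` is a mutation of `P`. -/
def IsMutation (P Q : FanoPolygon) : Prop :=
  ∃ w v : NZ, P.IsEdgeNormal w ∧ Primitive v ∧ dotZ w v = 0 ∧ IsMutationWith P w v Q

/-- `GL₂(ℤ)`-equivalence of Fano polygons. -/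
def GLEquiv (P Q : FanoPolygon) : Prop :=
  ∃ f : NZ ≃ₗ[ℤ] NZ, Q.verts = P.verts.image f

/-- Mutation-equivalence: the equivalence relation generated by mutations and
`GL₂(ℤ)`-transformations. -/
def MutEquiv (P Q : FanoPolygon) : Prop :=
  Relation.EqvGen (fun A B => IsMutation A B ∨ GLEquiv A B) P Q

/-- There exists a mutation of `P` with respect to `w`: a factor and lattice polytopes
`{G_h}` satisfying the defining inclusions. -/
def AdmitsMutation (P : FanoPolygon) (w : NZ) : Prop :=
  ∃ v : NZ, Primitive v ∧ dotZ w v = 0 ∧ ∃ G : ℤ → Set NQ, MutationData P w v G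

namespace FanoPolygon

/-- The number of lattice points on the boundary of `P`. -/
noncomputable def boundaryPts (P : FanoPolygon) : ℕ :=
  {v : NZ | ι v ∈ frontier P.hull}.ncard

/-- The number of lattice points in the strict interior of `P`. -/
noncomputable def interiorPts (P : FanoPolygon) : ℕ :=
  {v : NZ | ι v ∈ interior P.hull}.ncard

/-- `P` is minimal if every mutation has at least as many boundary lattice points. -/
def Minimal (P : FanoPolygon) : Prop :=
  ∀ Q : FanoPolygon, IsMutation P Q → P.boundaryPts ≤ Q.boundaryPts

/-- Empty residual basket: `r_E ∣ k_E` for every edge `E` of `P`. -/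
def EmptyBasket (P : FanoPolygon) : Prop :=
  ∀ w : NZ, P.IsEdgeNormal w → P.height w ∣ (P.width w : ℤ)

/-- The number `n` of primitive T-cones of `P`: `n = Σ_E ⌊k_E / r_E⌋`. -/
noncomputable def tConeCount (P : FanoPolygon) : ℕ :=
  ∑ᶠ w ∈ {w : NZ | P.IsEdgeNormal w}, P.width w / (P.height w).toNat

/-- All residual singularities of `P` are of type `1/3(1,1)`: every edge `E`
satisfies `r_E ∣ k_E` or (`r_E = 3` and `k_E ≡ 1 mod 3`). -/
def ThirdBasket (P : FanoPolygon) : Prop :=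
  ∀ w : NZ, P.IsEdgeNormal w →
    P.height w ∣ (P.width w : ℤ) ∨ (P.height w = 3 ∧ P.width w % 3 = 1)

/-- The number `m` of residual singularities `1/3(1,1)`:
the number of edges `E` with `r_E = 3` and `3 ∤ k_E`. -/
noncomputable def thirdCount (P : FanoPolygon) : ℕ :=
  {w : NZ | P.IsEdgeNormal w ∧ P.height w = 3 ∧ ¬ (3 ∣ P.width w)}.ncard

/-- The number of residual lattice points of `P`:
`Σ_E ( q_E(r_E − 1)/2 + max(q_E − 1, 0) )` with `q_E = k_E mod r_E`. -/
noncomputable def residualCount (P : FanoPolygon) : ℚ :=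
  ∑ᶠ w ∈ {w : NZ | P.IsEdgeNormal w},
    (((((P.width w : ℤ) % P.height w) : ℤ) : ℚ) * ((P.height w : ℚ) - 1) / 2
      + max (((((P.width w : ℤ) % P.height w) : ℤ) : ℚ) - 1) 0)

end FanoPolygon

/-- Embedding of the lattice into `ℝ²`, used to measure volumes. -/
def ιR (v : NZ) : ℝ × ℝ := ((v.1 : ℝ), (v.2 : ℝ))

namespace FanoPolygon

/-- The polygon, realised in `ℝ²`. -/
def hullR (P : FanoPolygon) : Set (ℝ × ℝ) := convexHull ℝ (ιR '' (P.verts : Set NZ))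

/-- Normalised volume (twice the Euclidean area) of `P`. -/
noncomputable def nvol (P : FanoPolygon) : ℝ := 2 * (MeasureTheory.volume P.hullR).toReal

/-- The dual polygon `P* = {u : u(x) ≥ −1 ∀ x ∈ P}`, realised in `ℝ²`. -/
def dualR (P : FanoPolygon) : Set (ℝ × ℝ) :=
  {u : ℝ × ℝ | ∀ x ∈ P.hullR, -1 ≤ u.1 * x.1 + u.2 * x.2}

/-- Normalised volume of the dual polygon `P*`. -/
noncomputable def nvolDual (P : FanoPolygon) : ℝ := 2 * (MeasureTheory.volume P.dualR).toReal

/-- The sublattice `Λ_P ⊆ M` generated by the primitive inner normal vectors of the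
edges of `P`. -/
def normalLattice (P : FanoPolygon) : Submodule ℤ NZ :=
  Submodule.span ℤ {w : NZ | P.IsEdgeNormal w}

/-- The index `[M : Λ_P]`. -/
noncomputable def latticeIndex (P : FanoPolygon) : ℕ :=
  P.normalLattice.toAddSubgroup.index

/-- A T-edge normal: an edge normal whose edge satisfies `k_E ≥ r_E`. -/
def IsTEdgeNormal (P : FanoPolygon) (w : NZ) : Prop :=
  P.IsEdgeNormal w ∧ P.height w ≤ (P.width w : ℤ)

/-- `ws` enumerates the primitive T-cone normals of `P` with multiplicities:
each T-edge normal `w` occurs exactly `⌊k_E/r_E⌋` times, and nothing else occurs. -/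
def IsTConeEnum (P : FanoPolygon) {n : ℕ} (ws : Fin n → NZ) : Prop :=
  ∀ w : NZ,
    (P.IsTEdgeNormal w →
      (Finset.univ.filter (fun i : Fin n => ws i = w)).card = P.width w / (P.height w).toNat) ∧
    (¬ P.IsTEdgeNormal w → (Finset.univ.filter (fun i : Fin n => ws i = w)).card = 0)

end FanoPolygon

end FanoPaper


namespace FanoPaper
namespace Proof

lemma ι_inj : Function.Injective ι := by
  intro x y h
  have h1 : (x.1 : ℚ) = y.1 := congrArg Prod.fst h
  have h2 : (x.2 : ℚ) = y.2 := congrArg Prod.snd h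
  exact Prod.ext (by exact_mod_cast h1) (by exact_mod_cast h2)

lemma dotQ_ι (w x : NZ) : dotQ w (ι x) = (dotZ w x : ℚ) := by
  simp only [dotQ, dotZ, ι]
  push_cast
  ring

lemma dotQ_combo (w : NZ) (x y : NQ) (c d : ℚ) :
    dotQ w (c • x + d • y) = c * dotQ w x + d * dotQ w y := by
  simp only [dotQ, Prod.fst_add, Prod.snd_add, Prod.smul_fst, Prod.smul_snd, smul_eq_mul]
  ring

/-- The primitive direction of the lines `{w = const}`. -/
def vperp (w : NZ) : NZ := (-w.2, w.1)

/-- A dual functional with `udual · vperp = 1`. -/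
def udual (a b : ℤ) : NZ := (-b, a)

/-- The point at height `h` (w.r.t. `w`) and coordinate `t` (w.r.t. `udual a b`). -/
def psi (w : NZ) (a b : ℤ) (h t : ℚ) : NQ :=
  (h * (a : ℚ) - t * (w.2 : ℚ), h * (b : ℚ) + t * (w.1 : ℚ))

section Coords

variable {w : NZ} {a b : ℤ} (hab : a * w.1 + b * w.2 = 1)

lemma habQ (hab : a * w.1 + b * w.2 = 1) : (a : ℚ) * (w.1 : ℚ) + (b : ℚ) * (w.2 : ℚ) = 1 := by
  exact_mod_cast congrArg (fun n : ℤ => (n : ℚ)) hab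

lemma dotZ_vperp (w : NZ) : dotZ w (vperp w) = 0 := by
  simp only [dotZ, vperp]; ring

lemma primitive_vperp (hw : Primitive w) : Primitive (vperp w) := by
  obtain ⟨a, b, hab⟩ := hw
  exact ⟨-b, a, by simp only [vperp]; linarith⟩

lemma dotZ_udual_vperp (hab : a * w.1 + b * w.2 = 1) : dotZ (udual a b) (vperp w) = 1 := by
  simp only [dotZ, udual, vperp]; linarith

lemma dotQ_w_psi (hab : a * w.1 + b * w.2 = 1) (h t : ℚ) : dotQ w (psi w a b h t) = h := by
  have := habQ hab
  simp only [dotQ, psi]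
  linear_combination h * this

lemma dotQ_u_psi (hab : a * w.1 + b * w.2 = 1) (h t : ℚ) : dotQ (udual a b) (psi w a b h t) = t := by
  have := habQ hab
  simp only [dotQ, psi, udual]
  push_cast
  linear_combination t * this

lemma psi_self (hab : a * w.1 + b * w.2 = 1) (x : NQ) :
    psi w a b (dotQ w x) (dotQ (udual a b) x) = x := by
  have hq := habQ hab
  apply Prod.ext
  · simp only [psi, dotQ, udual]
    push_cast
    linear_combination x.1 * hq
  · simp only [psi, dotQ, udual]
    push_cast
    linear_combination x.2 * hq

lemma eq_of_coords (hab : a * w.1 + b * w.2 = 1) {x y : NQ} (h1 : dotQ w x = dotQ w y)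
    (h2 : dotQ (udual a b) x = dotQ (udual a b) y) : x = y := by
  rw [← psi_self hab x, ← psi_self hab y, h1, h2]

lemma psi_combo {c1 c2 : ℚ} (h t1 t2 : ℚ) (hc : c1 + c2 = 1) :
    c1 • psi w a b h t1 + c2 • psi w a b h t2 = psi w a b h (c1 * t1 + c2 * t2) := by
  apply Prod.ext
  · simp only [psi, Prod.fst_add, Prod.snd_add, Prod.smul_fst, Prod.smul_snd, smul_eq_mul]
    linear_combination h * (a:ℚ) * hc
  · simp only [psi, Prod.fst_add, Prod.snd_add, Prod.smul_fst, Prod.smul_snd, smul_eq_mul]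
    linear_combination h * (b:ℚ) * hc

lemma psi_mem_segment {h t1 t t2 : ℚ} (h1 : t1 ≤ t) (h2 : t ≤ t2) :
    psi w a b h t ∈ segment ℚ (psi w a b h t1) (psi w a b h t2) := by
  rcases eq_or_lt_of_le (h1.trans h2) with heq | hlt
  · have ht : t = t1 := le_antisymm (heq ▸ h2) h1
    rw [ht, heq]
    exact left_mem_segment _ _ _
  · refine ⟨(t2 - t) / (t2 - t1), (t - t1) / (t2 - t1),
      div_nonneg (by linarith) (by linarith), div_nonneg (by linarith) (by linarith), ?_, ?_⟩
    · have hne : t2 - t1 ≠ 0 := sub_ne_zero.2 (ne_of_gt hlt)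
      rw [← add_div, div_eq_one_iff_eq hne]
      ring
    · have hne : t2 - t1 ≠ 0 := sub_ne_zero.2 (ne_of_gt hlt)
      have hc : (t2 - t) / (t2 - t1) + (t - t1) / (t2 - t1) = 1 := by
        rw [← add_div, div_eq_one_iff_eq hne]; ring
      rw [psi_combo h t1 t2 hc]
      congr 1
      field_simp
      ring

lemma ι_add_smul (C : NZ) (j : ℤ) :
    ι C + (j : ℚ) • ι (vperp w) = ι (C + j • vperp w) := by
  apply Prod.ext <;>
    · simp only [ι, vperp, Prod.fst_add, Prod.snd_add, Prod.smul_fst, Prod.smul_snd,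
        smul_eq_mul]
      push_cast
      ring

lemma dotZ_w_add_smul (C : NZ) (j : ℤ) : dotZ w (C + j • vperp w) = dotZ w C := by
  simp only [dotZ, vperp, Prod.fst_add, Prod.snd_add, Prod.smul_fst, Prod.smul_snd,
    smul_eq_mul]
  ring

lemma dotZ_u_add_smul (hab : a * w.1 + b * w.2 = 1) (C : NZ) (j : ℤ) :
    dotZ (udual a b) (C + j • vperp w) = dotZ (udual a b) C + j := by
  simp only [dotZ, udual, vperp, Prod.fst_add, Prod.snd_add, Prod.smul_fst, Prod.smul_snd,
    smul_eq_mul]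
  linear_combination j * hab

lemma ι_eq_psi (hab : a * w.1 + b * w.2 = 1) (C : NZ) :
    ι C = psi w a b ((dotZ w C : ℚ)) ((dotZ (udual a b) C : ℚ)) := by
  rw [← dotQ_ι, ← dotQ_ι, psi_self hab]

/-- Kernel of `w` on the lattice is spanned by `vperp w`. -/
lemma eq_smul_vperp_of_dotZ_eq_zero (hab : a * w.1 + b * w.2 = 1) {y : NZ}
    (hy : dotZ w y = 0) : y = (a * y.2 - b * y.1) • vperp w := by
  simp only [dotZ] at hy
  apply Prod.ext
  · simp only [vperp, Prod.smul_fst, Prod.smul_snd, smul_eq_mul]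
    linear_combination a * hy - y.1 * hab
  · simp only [vperp, Prod.smul_fst, Prod.smul_snd, smul_eq_mul]
    linear_combination b * hy - y.2 * hab

end Coords

end Proof
end FanoPaper
namespace FanoPaper
namespace Proof

lemma mem_hull {P : FanoPolygon} {V : NZ} (hV : V ∈ P.verts) : ι V ∈ P.hull :=
  subset_convexHull ℚ _ (Set.mem_image_of_mem _ hV)

lemma zero_mem_hull (P : FanoPolygon) : (0 : NQ) ∈ P.hull :=
  interior_subset P.zero_mem_interior

lemma hull_convex (P : FanoPolygon) : Convex ℚ P.hull := convex_convexHull ℚ _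

lemma edge_convex (P : FanoPolygon) (w : NZ) : Convex ℚ (P.edge w) := by
  intro x hx y hy c d hc hd hcd
  obtain ⟨hx1, hx2⟩ := hx
  obtain ⟨hy1, hy2⟩ := hy
  refine ⟨hull_convex P hx1 hy1 hc hd hcd, ?_⟩
  rw [dotQ_combo, hx2, hy2]
  linear_combination (P.hMin w : ℚ) * hcd

lemma slice_subset_edge (P : FanoPolygon) (w : NZ) : P.slice w (P.hMin w) ⊆ P.edge w := by
  apply convexHull_min ?_ (edge_convex P w)
  rintro _ ⟨z, ⟨hz1, hz2⟩, rfl⟩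
  exact ⟨hz1, by rw [dotQ_ι, hz2]⟩

lemma edge_subset_hull (P : FanoPolygon) (w : NZ) : P.edge w ⊆ P.hull := fun _ hx => hx.1

lemma lattice_hull_finite (P : FanoPolygon) : {z : NZ | ι z ∈ P.hull}.Finite := by
  set B1 := P.verts.sup' P.verts_nonempty (fun z => |z.1|) with hB1
  set B2 := P.verts.sup' P.verts_nonempty (fun z => |z.2|) with hB2
  set K : Set NQ := {x : NQ | |x.1| ≤ (B1 : ℚ) ∧ |x.2| ≤ (B2 : ℚ)} with hK
  have hKconv : Convex ℚ K := by
    rintro x ⟨hx1, hx2⟩ y ⟨hy1, hy2⟩ c d hc hd hcd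
    constructor
    · simp only [Prod.fst_add, Prod.smul_fst, smul_eq_mul]
      calc |c * x.1 + d * y.1| ≤ |c * x.1| + |d * y.1| := abs_add_le _ _
        _ = c * |x.1| + d * |y.1| := by
            rw [abs_mul, abs_mul, abs_of_nonneg hc, abs_of_nonneg hd]
        _ ≤ c * (B1 : ℚ) + d * (B1 : ℚ) := by
            exact add_le_add (mul_le_mul_of_nonneg_left hx1 hc)
              (mul_le_mul_of_nonneg_left hy1 hd)
        _ = (B1 : ℚ) := by rw [← add_mul, hcd, one_mul]
    · simp only [Prod.snd_add, Prod.smul_snd, smul_eq_mul]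
      calc |c * x.2 + d * y.2| ≤ |c * x.2| + |d * y.2| := abs_add_le _ _
        _ = c * |x.2| + d * |y.2| := by
            rw [abs_mul, abs_mul, abs_of_nonneg hc, abs_of_nonneg hd]
        _ ≤ c * (B2 : ℚ) + d * (B2 : ℚ) := by
            exact add_le_add (mul_le_mul_of_nonneg_left hx2 hc)
              (mul_le_mul_of_nonneg_left hy2 hd)
        _ = (B2 : ℚ) := by rw [← add_mul, hcd, one_mul]
  have hsub : P.hull ⊆ K := by
    apply convexHull_min ?_ hKconv
    rintro _ ⟨z, hz, rfl⟩
    constructor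
    · show |(z.1 : ℚ)| ≤ (B1 : ℚ)
      exact_mod_cast Finset.le_sup' (fun z : NZ => |z.1|) hz
    · show |(z.2 : ℚ)| ≤ (B2 : ℚ)
      exact_mod_cast Finset.le_sup' (fun z : NZ => |z.2|) hz
  apply Set.Finite.subset (Set.finite_Icc ((-B1, -B2) : NZ) ((B1, B2) : NZ))
  intro z hz
  obtain ⟨h1, h2⟩ := hsub hz
  have h1' : |z.1| ≤ B1 := by
    have := h1; simp only [ι] at this; exact_mod_cast this
  have h2' : |z.2| ≤ B2 := by
    have := h2; simp only [ι] at this; exact_mod_cast this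
  rw [abs_le] at h1' h2'
  exact Set.mem_Icc.2 ⟨⟨h1'.1, h2'.1⟩, ⟨h1'.2, h2'.2⟩⟩

lemma hull_eq_finset (P : FanoPolygon) :
    P.hull = convexHull ℚ ((P.verts.image ι : Finset NQ) : Set NQ) := by
  rw [Finset.coe_image]
  rfl

/-- A vertex of `P` cannot be written as a nontrivial convex combination of two points
of the hull, except trivially: the first point must be the vertex itself. -/
lemma vertex_extreme (P : FanoPolygon) {X : NZ} (hX : X ∈ P.verts) {p q : NQ}
    (hp : p ∈ P.hull) (hq : q ∈ P.hull) {c1 c2 : ℚ} (h1 : 0 < c1) (h2 : 0 < c2)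
    (hsum : c1 + c2 = 1) (heq : c1 • p + c2 • q = ι X) : p = ι X := by
  classical
  set s : Finset NQ := P.verts.image ι with hs
  rw [hull_eq_finset, Finset.convexHull_eq] at hp hq
  obtain ⟨wp, hwp0, hwp1, hwpc⟩ := hp
  obtain ⟨wq, hwq0, hwq1, hwqc⟩ := hq
  set c : NQ → ℚ := fun y => c1 * wp y + c2 * wq y with hcdef
  have hc0 : ∀ y ∈ s, 0 ≤ c y := fun y hy =>
    add_nonneg (mul_nonneg h1.le (hwp0 y hy)) (mul_nonneg h2.le (hwq0 y hy))
  have hc1 : ∑ y ∈ s, c y = 1 := by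
    simp only [hcdef, Finset.sum_add_distrib, ← Finset.mul_sum, hwp1, hwq1, mul_one, hsum, hs]
  have hcc : s.centerMass c id = ι X := by
    rw [← Finset.centerMass_segment s wp wq id hwp1 hwq1 c1 c2 hsum, hwpc, hwqc, heq]
  have hXs : ι X ∈ s := Finset.mem_image_of_mem ι hX
  have hsum_eq : ∑ y ∈ s, c y • y = ι X := by
    rw [show (∑ y ∈ s, c y • y) = ∑ y ∈ s, c y • id y from rfl,
      ← Finset.centerMass_eq_of_sum_1 s id hc1]
    exact hcc
  have hcle : c (ι X) ≤ 1 := hc1 ▸ Finset.single_le_sum hc0 hXs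
  by_cases hcx : c (ι X) = 1
  · -- all other weights vanish; wp is concentrated at ι X, so p = ι X
    have hwple : wp (ι X) ≤ 1 := hwp1 ▸ Finset.single_le_sum hwp0 hXs
    have hwqle : wq (ι X) ≤ 1 := hwq1 ▸ Finset.single_le_sum hwq0 hXs
    have hwpX : wp (ι X) = 1 := by
      by_contra hne
      have hlt : wp (ι X) < 1 := lt_of_le_of_ne hwple hne
      have : c1 * wp (ι X) < c1 * 1 := mul_lt_mul_of_pos_left hlt h1
      have hcx' : c1 * wp (ι X) + c2 * wq (ι X) = 1 := hcx
      nlinarith [mul_le_mul_of_nonneg_left hwqle h2.le]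
    have herasep : ∑ y ∈ s.erase (ι X), wp y = 0 := by
      have := Finset.add_sum_erase s wp hXs
      rw [hwp1, hwpX] at this
      linarith
    have hzero : ∀ y ∈ s.erase (ι X), wp y = 0 :=
      (Finset.sum_eq_zero_iff_of_nonneg
        (fun y hy => hwp0 y (Finset.mem_of_mem_erase hy))).1 herasep
    have hsum_p : ∑ y ∈ s, wp y • y = ι X := by
      rw [← Finset.add_sum_erase s (fun y => wp y • y) hXs, hwpX, one_smul,
        Finset.sum_eq_zero (fun y hy => by rw [hzero y hy, zero_smul]), add_zero]
    rw [← hwpc, show s.centerMass wp id = ∑ y ∈ s, wp y • y from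
      Finset.centerMass_eq_of_sum_1 s id hwp1, hsum_p]
  · exfalso
    have hclt : c (ι X) < 1 := lt_of_le_of_ne hcle hcx
    have herase_sum : ∑ y ∈ s.erase (ι X), c y = 1 - c (ι X) := by
      have h := Finset.add_sum_erase s c hXs
      rw [hc1] at h
      linarith
    have hadd := Finset.add_sum_erase s (fun y => c y • y) hXs
    rw [hsum_eq] at hadd
    have hsum_erase : ∑ y ∈ s.erase (ι X), c y • y = (1 - c (ι X)) • ι X := by
      rw [eq_sub_of_add_eq' hadd, sub_smul, one_smul]
    have hKpos : (0 : ℚ) < 1 - c (ι X) := by linarith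
    have hdsum : ∑ y ∈ s.erase (ι X), c y / (1 - c (ι X)) = 1 := by
      rw [← Finset.sum_div, herase_sum, div_self (ne_of_gt hKpos)]
    have hmem : ι X ∈ convexHull ℚ ((s.erase (ι X) : Finset NQ) : Set NQ) := by
      rw [Finset.convexHull_eq]
      refine ⟨fun y => c y / (1 - c (ι X)),
        fun y hy => div_nonneg (hc0 y (Finset.mem_of_mem_erase hy)) hKpos.le, hdsum, ?_⟩
      rw [Finset.centerMass_eq_of_sum_1 _ id hdsum]
      simp only [id_eq, div_eq_inv_mul, mul_smul, ← Finset.smul_sum]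
      rw [hsum_erase, smul_smul, inv_mul_cancel₀ (ne_of_gt hKpos), one_smul]
    apply P.verts_extreme X hX
    have himg : ((s.erase (ι X) : Finset NQ) : Set NQ) =
        ι '' ((P.verts.erase X : Finset NZ) : Set NZ) := by
      rw [hs, ← Finset.image_erase ι_inj, Finset.coe_image]
    rwa [← himg]

end Proof
end FanoPaper
namespace FanoPaper
namespace Proof

lemma ι_add_smul' (C V : NZ) (j : ℤ) : ι C + (j : ℚ) • ι V = ι (C + j • V) := by
  apply Prod.ext <;>
    · simp only [ι, Prod.fst_add, Prod.snd_add, Prod.smul_fst, Prod.smul_snd, smul_eq_mul]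
      push_cast
      ring

lemma primitive_ne_zero {v : NZ} (hv : Primitive v) : v ≠ 0 := by
  rintro rfl
  obtain ⟨a, b, hab⟩ := hv
  simp at hab

lemma dotZ_sub (w y z : NZ) : dotZ w (y - z) = dotZ w y - dotZ w z := by
  simp only [dotZ, Prod.fst_sub, Prod.snd_sub]
  ring

lemma dotZ_smul_right (u v : NZ) (m : ℤ) : dotZ u (m • v) = m * dotZ u v := by
  simp only [dotZ, Prod.smul_fst, Prod.smul_snd, smul_eq_mul]
  ring

section Spread

variable {w : NZ} {a b : ℤ}

/-- On a finite nonempty set of lattice points lying at a common height, there are points of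
minimal and maximal coordinate, and the cardinality is at most the coordinate spread plus one. -/
lemma exists_spread (hab : a * w.1 + b * w.2 = 1) {S : Set NZ} (hfin : S.Finite)
    (hne : S.Nonempty) {h : ℤ} (hht : ∀ z ∈ S, dotZ w z = h) :
    ∃ A ∈ S, ∃ B ∈ S,
      (∀ z ∈ S, dotZ (udual a b) A ≤ dotZ (udual a b) z ∧
        dotZ (udual a b) z ≤ dotZ (udual a b) B) ∧
      (S.ncard : ℤ) ≤ dotZ (udual a b) B - dotZ (udual a b) A + 1 := by
  classical
  set F := hfin.toFinset with hF
  have hFne : F.Nonempty := by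
    rwa [hF, Set.Finite.toFinset_nonempty]
  obtain ⟨A, hA, hAmin⟩ := F.exists_min_image (dotZ (udual a b)) hFne
  obtain ⟨B, hB, hBmax⟩ := F.exists_max_image (dotZ (udual a b)) hFne
  have hAS : A ∈ S := hfin.mem_toFinset.1 hA
  have hBS : B ∈ S := hfin.mem_toFinset.1 hB
  have hinj : Set.InjOn (dotZ (udual a b)) (F : Set NZ) := by
    intro z1 hz1 z2 hz2 hz
    have hz1S : z1 ∈ S := hfin.mem_toFinset.1 hz1
    have hz2S : z2 ∈ S := hfin.mem_toFinset.1 hz2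
    apply ι_inj
    apply eq_of_coords hab
    · rw [dotQ_ι, dotQ_ι, hht z1 hz1S, hht z2 hz2S]
    · rw [dotQ_ι, dotQ_ι, hz]
  have hcard : F.card = (F.image (dotZ (udual a b))).card :=
    (Finset.card_image_of_injOn hinj).symm
  have hsub : F.image (dotZ (udual a b)) ⊆
      Finset.Icc (dotZ (udual a b) A) (dotZ (udual a b) B) := by
    intro t ht
    obtain ⟨z, hz, rfl⟩ := Finset.mem_image.1 ht
    exact Finset.mem_Icc.2 ⟨hAmin z hz, hBmax z hz⟩
  have hle := Finset.card_le_card hsub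
  rw [Int.card_Icc] at hle
  have hAB : dotZ (udual a b) A ≤ dotZ (udual a b) B := hAmin B hB
  have hnc : S.ncard = F.card := Set.ncard_eq_toFinset_card S hfin
  refine ⟨A, hAS, B, hBS, fun z hz => ⟨hAmin z (hfin.mem_toFinset.2 hz),
    hBmax z (hfin.mem_toFinset.2 hz)⟩, ?_⟩
  rw [hnc, hcard]
  omega

end Spread

lemma pair_add_pair (x y z t : NQ) :
    ({x, y} : Set NQ) + ({z, t} : Set NQ) = {x + z, x + t, y + z, y + t} := by
  ext p
  simp only [Set.mem_add, Set.mem_insert_iff, Set.mem_singleton_iff]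
  constructor
  · rintro ⟨u, (rfl | rfl), v, (rfl | rfl), rfl⟩ <;> tauto
  · rintro (rfl | rfl | rfl | rfl)
    · exact ⟨x, Or.inl rfl, z, Or.inl rfl, rfl⟩
    · exact ⟨x, Or.inl rfl, t, Or.inr rfl, rfl⟩
    · exact ⟨y, Or.inr rfl, z, Or.inl rfl, rfl⟩
    · exact ⟨y, Or.inr rfl, t, Or.inr rfl, rfl⟩

lemma segment_add_factor (C D : NZ) (m : ℚ) (v : NZ) :
    convexHull ℚ ({ι C, ι D} : Set NQ) + m • factor v =
      convexHull ℚ ({ι C, ι C + m • ι v, ι D, ι D + m • ι v} : Set NQ) := by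
  have h1 : m • factor v = convexHull ℚ ({(0 : NQ), m • ι v} : Set NQ) := by
    rw [factor, ← convexHull_smul]
    congr 1
    rw [Set.smul_set_insert, Set.smul_set_singleton, smul_zero]
  rw [h1, ← convexHull_add]
  congr 1
  rw [pair_add_pair]
  simp only [add_zero]

lemma empty_lattice_polytope : IsLatticePolytope (∅ : Set NQ) :=
  ⟨∅, by simp⟩

lemma pair_lattice_polytope (C D : NZ) :
    IsLatticePolytope (convexHull ℚ ({ι C, ι D} : Set NQ)) := by
  refine ⟨{C, D}, ?_⟩
  congr 1
  simp [Set.image_insert_eq]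

end Proof
end FanoPaper
namespace FanoPaper
namespace Proof

lemma psi_smul {w : NZ} {a b : ℤ} (c h t : ℚ) :
    c • psi w a b h t = psi w a b (c * h) (c * t) := by
  apply Prod.ext <;>
    · simp only [psi, Prod.smul_fst, Prod.smul_snd, smul_eq_mul]
      ring

section Key

variable {P : FanoPolygon} {w : NZ} {a b : ℤ}

/-- Key construction: the slice polytopes `G_h` exist whenever `k_E ≥ r_E`. -/
lemma key (hab : a * w.1 + b * w.2 = 1) (hw : P.IsEdgeNormal w)
    (hk : P.height w ≤ (P.width w : ℤ)) (h : ℤ) (h1 : P.hMin w ≤ h) (h2 : h ≤ -1) :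
    ∃ S : Set NQ, IsLatticePolytope S ∧
      ι '' {x : NZ | x ∈ P.verts ∧ dotZ w x = h} ⊆ S + ((|h| : ℚ) • factor (vperp w)) ∧
      S + ((|h| : ℚ) • factor (vperp w)) ⊆ P.slice w h := by
  classical
  set VertsH := P.verts.filter (fun z => dotZ w z = h) with hVH
  by_cases hVne : VertsH.Nonempty
  swap
  · refine ⟨∅, empty_lattice_polytope, ?_, ?_⟩
    · have hset : {x : NZ | x ∈ P.verts ∧ dotZ w x = h} = ∅ := by
        ext x
        simp only [Set.mem_setOf_eq, Set.mem_empty_iff_false, iff_false, not_and]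
        intro hx1 hx2
        exact hVne ⟨x, Finset.mem_filter.2 ⟨hx1, hx2⟩⟩
      rw [hset, Set.image_empty]
      exact Set.empty_subset _
    · rw [Set.empty_add]
      exact Set.empty_subset _
  -- the unified choice of the endpoints C, D
  obtain ⟨C, D, hCw, hDw, hCD, hcov, hlat⟩ : ∃ C D : NZ, dotZ w C = h ∧ dotZ w D = h ∧
      dotZ (udual a b) C ≤ dotZ (udual a b) D ∧
      (∀ Z ∈ VertsH, dotZ (udual a b) C ≤ dotZ (udual a b) Z ∧ dotZ (udual a b) Z ≤ dotZ (udual a b) D + (-h)) ∧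
      (∀ j : ℤ, 0 ≤ j → j ≤ dotZ (udual a b) D + (-h) - dotZ (udual a b) C → ι (C + j • vperp w) ∈ P.hull) := by
    obtain ⟨X, hX, hXmin⟩ := VertsH.exists_min_image (dotZ (udual a b)) hVne
    obtain ⟨Y, hY, hYmax⟩ := VertsH.exists_max_image (dotZ (udual a b)) hVne
    have hXv : X ∈ P.verts := (Finset.mem_filter.1 hX).1
    have hXh : dotZ w X = h := (Finset.mem_filter.1 hX).2
    have hYv : Y ∈ P.verts := (Finset.mem_filter.1 hY).1
    have hYh : dotZ w Y = h := (Finset.mem_filter.1 hY).2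
    have hXY : dotZ (udual a b) X ≤ dotZ (udual a b) Y := hXmin Y hY
    have hXpsi : ι X = psi w a b (h : ℚ) ((dotZ (udual a b) X : ℤ) : ℚ) := by
      rw [ι_eq_psi hab X, hXh]
    have hYpsi : ι Y = psi w a b (h : ℚ) ((dotZ (udual a b) Y : ℤ) : ℚ) := by
      rw [ι_eq_psi hab Y, hYh]
    by_cases hd : -h ≤ dotZ (udual a b) Y - dotZ (udual a b) X
    · refine ⟨X, Y + h • vperp w, hXh, by rw [dotZ_w_add_smul, hYh], ?_, ?_, ?_⟩
      · rw [dotZ_u_add_smul hab]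
        omega
      · intro Z hZ
        have := hYmax Z hZ
        rw [dotZ_u_add_smul hab]
        exact ⟨hXmin Z hZ, by omega⟩
      · intro j hj0 hj1
        rw [dotZ_u_add_smul hab] at hj1
        have hjle : j ≤ dotZ (udual a b) Y - dotZ (udual a b) X := by omega
        have hmem : ι (X + j • vperp w) = psi w a b (h : ℚ) ((dotZ (udual a b) X + j : ℤ) : ℚ) := by
          rw [ι_eq_psi hab _, dotZ_w_add_smul, dotZ_u_add_smul hab, hXh]
        rw [hmem]
        have hseg : psi w a b (h : ℚ) ((dotZ (udual a b) X + j : ℤ) : ℚ) ∈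
            segment ℚ (psi w a b (h : ℚ) ((dotZ (udual a b) X : ℤ) : ℚ))
              (psi w a b (h : ℚ) ((dotZ (udual a b) Y : ℤ) : ℚ)) := by
          apply psi_mem_segment <;> exact_mod_cast (by omega : _)
        rw [← hXpsi, ← hYpsi] at hseg
        exact (hull_convex P).segment_subset (mem_hull hXv) (mem_hull hYv) hseg
    · push_neg at hd
      -- edge facts
      have hMle : P.hMin w ≤ -1 := le_trans h1 h2
      set ES : Set NZ := {z : NZ | ι z ∈ P.edge w} with hES
      have hESfin : ES.Finite :=
        (lattice_hull_finite P).subset (fun z hz => edge_subset_hull P w hz)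
      have hESne : ES.Nonempty := by
        have hcard := hw.2
        have : (P.verts.filter (fun z => dotZ w z = P.hMin w)).Nonempty :=
          Finset.card_pos.1 (by omega)
        obtain ⟨V, hV⟩ := this
        have hV1 : V ∈ P.verts := (Finset.mem_filter.1 hV).1
        have hV2 : dotZ w V = P.hMin w := (Finset.mem_filter.1 hV).2
        exact ⟨V, ⟨mem_hull hV1, by rw [dotQ_ι, hV2]⟩⟩
      have hESh : ∀ z ∈ ES, dotZ w z = P.hMin w := by
        intro z hz
        have := hz.2
        rw [dotQ_ι] at this
        exact_mod_cast this
      obtain ⟨A, hA, B, hB, hABcov, hABcard⟩ := exists_spread hab hESfin hESne hESh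
      -- the width bound
      have hnc1 : 0 < ES.ncard := (Set.ncard_pos hESfin).2 hESne
      have hwdef : P.width w = ES.ncard - 1 := rfl
      have hspread : P.height w ≤ dotZ (udual a b) B - dotZ (udual a b) A := by
        have : (P.width w : ℤ) = (ES.ncard : ℤ) - 1 := by
          rw [hwdef]
          omega
        omega
      have hr : P.height w = -(P.hMin w) := rfl
      -- the rational slice at height h
      set μ : ℚ := (h : ℚ) / (P.hMin w : ℚ) with hμ
      have hMne : ((P.hMin w : ℤ) : ℚ) < 0 := by exact_mod_cast (by omega : P.hMin w < 0)
      have hhQ : ((h : ℤ) : ℚ) < 0 := by exact_mod_cast (by omega : h < 0)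
      have hμpos : 0 < μ := by
        rw [hμ, ← neg_div_neg_eq]
        exact div_pos (by linarith) (by linarith)
      have hμ1 : μ ≤ 1 := by
        rw [hμ, ← neg_div_neg_eq, div_le_one (by linarith)]
        have : (P.hMin w : ℚ) ≤ (h : ℚ) := by exact_mod_cast h1
        linarith
      have hμMin : μ * (P.hMin w : ℚ) = (h : ℚ) := by
        rw [hμ, div_mul_cancel₀ _ (ne_of_lt hMne)]
      set α : ℚ := μ * (dotZ (udual a b) A : ℚ) with hα
      set β : ℚ := μ * (dotZ (udual a b) B : ℚ) with hβ
      have hA_h : dotZ w A = P.hMin w := hESh A hA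
      have hB_h : dotZ w B = P.hMin w := hESh B hB
      have hpA : psi w a b (h : ℚ) α ∈ P.hull := by
        have hmem := hull_convex P (edge_subset_hull P w hA) (zero_mem_hull P)
          hμpos.le (show (0:ℚ) ≤ 1 - μ by linarith) (show μ + (1 - μ) = 1 by ring)
        have heq : μ • ι A + (1 - μ) • (0 : NQ) = psi w a b (h : ℚ) α := by
          rw [smul_zero, add_zero, ι_eq_psi hab A, hA_h, psi_smul, hμMin]
        rwa [heq] at hmem
      have hpB : psi w a b (h : ℚ) β ∈ P.hull := by
        have hmem := hull_convex P (edge_subset_hull P w hB) (zero_mem_hull P)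
          hμpos.le (show (0:ℚ) ≤ 1 - μ by linarith) (show μ + (1 - μ) = 1 by ring)
        have heq : μ • ι B + (1 - μ) • (0 : NQ) = psi w a b (h : ℚ) β := by
          rw [smul_zero, add_zero, ι_eq_psi hab B, hB_h, psi_smul, hμMin]
        rwa [heq] at hmem
      have hβα : -(h : ℚ) ≤ β - α := by
        have hABQ : (-(P.hMin w) : ℚ) ≤ ((dotZ (udual a b) B : ℤ) : ℚ) - ((dotZ (udual a b) A : ℤ) : ℚ) := by
          have hZ : -(P.hMin w) ≤ dotZ (udual a b) B - dotZ (udual a b) A := by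
            rw [← hr]; exact hspread
          exact_mod_cast hZ
        have h1' : μ * (-(P.hMin w) : ℚ) ≤ μ * (((dotZ (udual a b) B : ℤ) : ℚ) - ((dotZ (udual a b) A : ℤ) : ℚ)) :=
          mul_le_mul_of_nonneg_left hABQ hμpos.le
        have h2' : μ * (-(P.hMin w) : ℚ) = -(h : ℚ) := by
          push_cast
          rw [mul_neg, hμMin]  -- careful
        rw [hα, hβ]
        nlinarith [h1', h2']
      by_cases hbX : ((dotZ (udual a b) X : ℤ) : ℚ) + -(h : ℚ) ≤ β
      · -- extend to the right of X
        refine ⟨X, X, hXh, hXh, le_refl _, ?_, ?_⟩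
        · intro Z hZ
          refine ⟨hXmin Z hZ, ?_⟩
          have := hYmax Z hZ
          omega
        · intro j hj0 hj1
          have hjle : j ≤ -h := by omega
          have hmem : ι (X + j • vperp w) = psi w a b (h : ℚ) ((dotZ (udual a b) X + j : ℤ) : ℚ) := by
            rw [ι_eq_psi hab _, dotZ_w_add_smul, dotZ_u_add_smul hab, hXh]
          rw [hmem]
          have hseg : psi w a b (h : ℚ) ((dotZ (udual a b) X + j : ℤ) : ℚ) ∈
              segment ℚ (psi w a b (h : ℚ) ((dotZ (udual a b) X : ℤ) : ℚ)) (psi w a b (h : ℚ) β) := by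
            apply psi_mem_segment
            · exact_mod_cast (by omega : dotZ (udual a b) X ≤ dotZ (udual a b) X + j)
            · have : ((dotZ (udual a b) X + j : ℤ) : ℚ) ≤ ((dotZ (udual a b) X : ℤ) : ℚ) + -(h : ℚ) := by
                push_cast
                have : (j : ℚ) ≤ -(h : ℚ) := by exact_mod_cast hjle
                linarith
              linarith
          rw [← hXpsi] at hseg
          exact (hull_convex P).segment_subset (mem_hull hXv) hpB hseg
      · by_cases hbY : α ≤ ((dotZ (udual a b) Y : ℤ) : ℚ) + (h : ℚ)
        · -- extend to the left of Y
          refine ⟨Y + h • vperp w, Y + h • vperp w, by rw [dotZ_w_add_smul, hYh],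
            by rw [dotZ_w_add_smul, hYh], le_refl _, ?_, ?_⟩
          · intro Z hZ
            rw [dotZ_u_add_smul hab]
            have h1' := hXmin Z hZ
            have h2' := hYmax Z hZ
            omega
          · intro j hj0 hj1
            rw [dotZ_u_add_smul hab] at hj1
            have hjle : j ≤ -h := by omega
            have hCj : Y + h • vperp w + j • vperp w = Y + (h + j) • vperp w := by
              rw [add_assoc, ← add_smul]
            have hmem : ι (Y + h • vperp w + j • vperp w) =
                psi w a b (h : ℚ) ((dotZ (udual a b) Y + (h + j) : ℤ) : ℚ) := by
              rw [hCj, ι_eq_psi hab _, dotZ_w_add_smul, dotZ_u_add_smul hab, hYh]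
            rw [hmem]
            have hseg : psi w a b (h : ℚ) ((dotZ (udual a b) Y + (h + j) : ℤ) : ℚ) ∈
                segment ℚ (psi w a b (h : ℚ) α) (psi w a b (h : ℚ) ((dotZ (udual a b) Y : ℤ) : ℚ)) := by
              apply psi_mem_segment
              · have : α ≤ ((dotZ (udual a b) Y : ℤ) : ℚ) + (h : ℚ) := hbY
                have hj0' : (0 : ℚ) ≤ (j : ℚ) := by exact_mod_cast hj0
                push_cast
                push_cast at this
                linarith
              · have hjle' : (j : ℚ) ≤ -(h : ℚ) := by exact_mod_cast hjle
                push_cast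
                linarith
            rw [← hYpsi] at hseg
            exact (hull_convex P).segment_subset hpA (mem_hull hYv) hseg
        · -- impossible: X would be interior to the rational slice
          exfalso
          push_neg at hbX hbY
          have hXYQ : ((dotZ (udual a b) X : ℤ) : ℚ) ≤ ((dotZ (udual a b) Y : ℤ) : ℚ) := by exact_mod_cast hXY
          have hαX : α < ((dotZ (udual a b) X : ℤ) : ℚ) := by linarith
          have hYβ : ((dotZ (udual a b) Y : ℤ) : ℚ) < β := by linarith
          have hXβ : ((dotZ (udual a b) X : ℤ) : ℚ) < β := by linarith
          set tXq : ℚ := ((dotZ (udual a b) X : ℤ) : ℚ) with htXq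
          have hden : 0 < β - α := by linarith
          set c1 : ℚ := (β - tXq) / (β - α) with hc1
          set c2 : ℚ := (tXq - α) / (β - α) with hc2
          have hc1pos : 0 < c1 := div_pos (by linarith) hden
          have hc2pos : 0 < c2 := div_pos (by linarith) hden
          have hcsum : c1 + c2 = 1 := by
            rw [hc1, hc2, ← add_div, div_eq_one_iff_eq (ne_of_gt hden)]
            ring
          have hcombo : c1 • psi w a b (h : ℚ) α + c2 • psi w a b (h : ℚ) β = ι X := by
            rw [psi_combo _ _ _ hcsum, hXpsi]
            congr 1
            rw [hc1, hc2]
            field_simp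
            ring
          have := vertex_extreme P hXv hpA hpB hc1pos hc2pos hcsum hcombo
          have hcoord : dotQ (udual a b) (psi w a b (h : ℚ) α) = dotQ (udual a b) (ι X) := by rw [this]
          rw [dotQ_u_psi hab, dotQ_ι] at hcoord
          rw [hcoord] at hαX
          exact lt_irrefl _ hαX
  -- now build the lattice polytope S from C and D
  have habs : |(h : ℚ)| = ((-h : ℤ) : ℚ) := by
    push_cast
    rw [abs_of_neg (show (h : ℚ) < 0 by exact_mod_cast (show h < 0 by omega))]
  have hfac : convexHull ℚ ({ι C, ι D} : Set NQ) + ((|h| : ℚ) • factor (vperp w)) =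
      convexHull ℚ ({ι C, ι C + ((-h : ℤ) : ℚ) • ι (vperp w), ι D,
        ι D + ((-h : ℤ) : ℚ) • ι (vperp w)} : Set NQ) := by
    rw [habs]
    exact segment_add_factor C D ((-h : ℤ) : ℚ) (vperp w)
  have h0DC : dotZ w (D - C) = 0 := by rw [dotZ_sub, hCw, hDw, sub_self]
  have hsm := eq_smul_vperp_of_dotZ_eq_zero hab h0DC
  have hMeq : a * (D - C).2 - b * (D - C).1 = dotZ (udual a b) D - dotZ (udual a b) C := by
    simp only [udual, dotZ, Prod.fst_sub, Prod.snd_sub]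
    ring
  rw [hMeq] at hsm
  have hDC : D = C + (dotZ (udual a b) D - dotZ (udual a b) C) • vperp w :=
    sub_eq_iff_eq_add'.1 hsm
  refine ⟨convexHull ℚ {ι C, ι D}, pair_lattice_polytope C D, ?_, ?_⟩
  · rw [hfac]
    rintro x ⟨Z, ⟨hZ1, hZ2⟩, rfl⟩
    have hZmem : Z ∈ VertsH := Finset.mem_filter.2 ⟨hZ1, hZ2⟩
    obtain ⟨hc1, hc2⟩ := hcov Z hZmem
    have hZpsi : ι Z = psi w a b (h : ℚ) ((dotZ (udual a b) Z : ℤ) : ℚ) := by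
      rw [ι_eq_psi hab Z, hZ2]
    have hCpsi : ι C = psi w a b (h : ℚ) ((dotZ (udual a b) C : ℤ) : ℚ) := by
      rw [ι_eq_psi hab C, hCw]
    have hDpsi : ι D + ((-h : ℤ) : ℚ) • ι (vperp w) =
        psi w a b (h : ℚ) ((dotZ (udual a b) D + -h : ℤ) : ℚ) := by
      rw [ι_add_smul' D (vperp w) (-h), ι_eq_psi hab _, dotZ_w_add_smul,
        dotZ_u_add_smul hab, hDw]
    have hseg : ι Z ∈ segment ℚ (ι C) (ι D + ((-h : ℤ) : ℚ) • ι (vperp w)) := by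
      rw [hZpsi, hCpsi, hDpsi]
      apply psi_mem_segment
      · exact_mod_cast hc1
      · exact_mod_cast hc2
    have hsub : ({ι C, ι D + ((-h : ℤ) : ℚ) • ι (vperp w)} : Set NQ) ⊆
        ({ι C, ι C + ((-h : ℤ) : ℚ) • ι (vperp w), ι D,
          ι D + ((-h : ℤ) : ℚ) • ι (vperp w)} : Set NQ) := by
      intro t ht
      simp only [Set.mem_insert_iff, Set.mem_singleton_iff] at ht ⊢
      tauto
    exact convexHull_mono hsub (by rw [convexHull_pair]; exact hseg)
  · rw [hfac]
    have hslice : ∀ j : ℤ, 0 ≤ j → j ≤ dotZ (udual a b) D + -h - dotZ (udual a b) C →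
        ι (C + j • vperp w) ∈ P.slice w h := by
      intro j hj0 hj1
      exact subset_convexHull ℚ _
        ⟨C + j • vperp w, ⟨hlat j hj0 hj1, by rw [dotZ_w_add_smul, hCw]⟩, rfl⟩
    apply convexHull_min ?_ (convex_convexHull ℚ _)
    intro x hx
    simp only [Set.mem_insert_iff, Set.mem_singleton_iff] at hx
    rcases hx with rfl | rfl | rfl | rfl
    · have := hslice 0 le_rfl (by omega)
      rwa [zero_smul, add_zero] at this
    · rw [ι_add_smul' C (vperp w) (-h)]
      exact hslice (-h) (by omega) (by omega)
    · have := hslice (dotZ (udual a b) D - dotZ (udual a b) C) (by omega) (by omega)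
      rwa [← hDC] at this
    · rw [ι_add_smul' D (vperp w) (-h)]
      have hDC2 : D + (-h) • vperp w =
          C + (dotZ (udual a b) D - dotZ (udual a b) C + -h) • vperp w := by
        conv_lhs => rw [hDC]
        rw [add_assoc, ← add_smul]
      rw [hDC2]
      exact hslice _ (by omega) (by omega)

end Key

end Proof
end FanoPaper
namespace FanoPaper
namespace Proof

lemma main (P : FanoPolygon) (w : NZ) (hw : P.IsEdgeNormal w) :
    AdmitsMutation P w ↔ P.height w ≤ (P.width w : ℤ) := by
  classical
  obtain ⟨a, b, hab⟩ := hw.1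
  constructor
  · rintro ⟨v', hvprim, hvdot, G, MD⟩
    by_cases hneg : P.hMin w ≤ -1
    swap
    · have hh : P.height w = -(P.hMin w) := rfl
      omega
    · obtain ⟨hlatt, inc1, inc2⟩ := MD (P.hMin w) le_rfl hneg
      obtain ⟨T, hT⟩ := hlatt
      set r : ℤ := -(P.hMin w) with hr
      have hr1 : 1 ≤ r := by omega
      have hrQ : (0 : ℚ) < (r : ℚ) := by exact_mod_cast (by omega : (0 : ℤ) < r)
      have hfil : (P.verts.filter (fun z => dotZ w z = P.hMin w)).Nonempty :=
        Finset.card_pos.1 (by have := hw.2; omega)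
      obtain ⟨V, hV⟩ := hfil
      have hV1 : V ∈ P.verts := (Finset.mem_filter.1 hV).1
      have hV2 : dotZ w V = P.hMin w := (Finset.mem_filter.1 hV).2
      have hVmem : ι V ∈ G (P.hMin w) + ((|(P.hMin w : ℚ)|) • factor v') :=
        inc1 ⟨V, ⟨hV1, hV2⟩, rfl⟩
      rw [Set.mem_add] at hVmem
      obtain ⟨g, hg, fq, hfq, hsum⟩ := hVmem
      have hGne : (G (P.hMin w)).Nonempty := ⟨g, hg⟩
      rw [hT] at hGne
      have hTne : T.Nonempty := by
        have himg : (ι '' (T : Set NZ)).Nonempty := convexHull_nonempty_iff.1 hGne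
        obtain ⟨_, z, hz, _⟩ := himg
        exact ⟨z, hz⟩
      obtain ⟨t0, ht0⟩ := hTne
      have habs : |(P.hMin w : ℚ)| = (r : ℚ) := by
        have hlt : (P.hMin w : ℚ) < 0 := by exact_mod_cast (by omega : P.hMin w < 0)
        rw [abs_of_neg hlt]
        exact_mod_cast (show -(P.hMin w) = r by omega)
      have hedge : ∀ j : ℤ, 0 ≤ j → j ≤ r → ι (t0 + j • v') ∈ P.edge w := by
        intro j h0 hjr
        have hg0 : ι t0 ∈ G (P.hMin w) := by
          rw [hT]
          exact subset_convexHull ℚ _ ⟨t0, Finset.mem_coe.2 ht0, rfl⟩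
        have hj0Q : (0 : ℚ) ≤ (j : ℚ) := by exact_mod_cast h0
        have hjrQ : (j : ℚ) ≤ (r : ℚ) := by exact_mod_cast hjr
        have hjf : ((j : ℚ) / (r : ℚ)) • ι v' ∈ factor v' := by
          rw [factor, convexHull_pair]
          refine ⟨1 - (j : ℚ) / (r : ℚ), (j : ℚ) / (r : ℚ), ?_, ?_, by ring, ?_⟩
          · have : (j : ℚ) / (r : ℚ) ≤ 1 := (div_le_one hrQ).2 hjrQ
            linarith
          · exact div_nonneg hj0Q hrQ.le
          · rw [smul_zero, zero_add]
        have hsmul : (|(P.hMin w : ℚ)|) • (((j : ℚ) / (r : ℚ)) • ι v') = (j : ℚ) • ι v' := by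
          rw [habs, smul_smul]
          congr 1
          field_simp
        have hmem : ι t0 + (j : ℚ) • ι v' ∈
            G (P.hMin w) + ((|(P.hMin w : ℚ)|) • factor v') := by
          apply Set.add_mem_add hg0
          rw [← hsmul]
          exact Set.smul_mem_smul_set hjf
        rw [ι_add_smul'] at hmem
        exact slice_subset_edge P w (inc2 hmem)
      have hv0 : v' ≠ 0 := primitive_ne_zero hvprim
      have hinj : Set.InjOn (fun j : ℤ => t0 + j • v') ↑(Finset.Icc (0 : ℤ) r) := by
        intro j1 _ j2 _ hj
        simp only at hj
        have heq : j1 • v' = j2 • v' := add_left_cancel hj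
        have h1 : j1 * v'.1 = j2 * v'.1 := by
          have := congrArg Prod.fst heq
          simpa using this
        have h2 : j1 * v'.2 = j2 * v'.2 := by
          have := congrArg Prod.snd heq
          simpa using this
        have hcase : v'.1 ≠ 0 ∨ v'.2 ≠ 0 := by
          by_contra hcon
          push_neg at hcon
          exact hv0 (Prod.ext hcon.1 hcon.2)
        rcases hcase with hc | hc
        · exact mul_right_cancel₀ hc h1
        · exact mul_right_cancel₀ hc h2
      have hsubE : ↑((Finset.Icc (0 : ℤ) r).image (fun j : ℤ => t0 + j • v')) ⊆
          {z : NZ | ι z ∈ P.edge w} := by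
        intro z hz
        simp only [Finset.coe_image, Set.mem_image, Finset.mem_coe, Finset.mem_Icc] at hz
        obtain ⟨j, hj, rfl⟩ := hz
        exact hedge j hj.1 hj.2
      have hfin : {z : NZ | ι z ∈ P.edge w}.Finite :=
        (lattice_hull_finite P).subset (fun z hz => edge_subset_hull P w hz)
      have hcard : ((Finset.Icc (0 : ℤ) r).image (fun j : ℤ => t0 + j • v')).card
          = (Finset.Icc (0 : ℤ) r).card := Finset.card_image_of_injOn hinj
      have hIcc : (Finset.Icc (0 : ℤ) r).card = r.toNat + 1 := by
        rw [Int.card_Icc]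
        omega
      have hle : r.toNat + 1 ≤ {z : NZ | ι z ∈ P.edge w}.ncard := by
        calc r.toNat + 1
            = (↑((Finset.Icc (0 : ℤ) r).image (fun j : ℤ => t0 + j • v')) : Set NZ).ncard := by
              rw [Set.ncard_coe_finset, hcard, hIcc]
          _ ≤ _ := Set.ncard_le_ncard hsubE hfin
      have hwdef : P.width w = {z : NZ | ι z ∈ P.edge w}.ncard - 1 := rfl
      have hhdef : P.height w = r := rfl
      omega
  · intro hk
    refine ⟨vperp w, primitive_vperp hw.1, dotZ_vperp w,
      fun h => if hc : P.hMin w ≤ h ∧ h ≤ -1 then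
        (key hab hw hk h hc.1 hc.2).choose else ∅, ?_⟩
    intro h hh1 hh2
    have hspec := (key hab hw hk h hh1 hh2).choose_spec
    simpa only [dif_pos (And.intro hh1 hh2)] using hspec

end Proof
end FanoPaper
open FanoPaper in
/-- `P` admits a mutation with respect to the inner normal `w` of an edge `E`
iff `k_E ≥ r_E`. -/
theorem admitsMutation_iff_width_ge_height (P : FanoPolygon) (w : NZ)
    (hw : P.IsEdgeNormal w) :
    AdmitsMutation P w ↔ P.height w ≤ (P.width w : ℤ) := by
  exact FanoPaper.Proof.main P w hw
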